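/- Let S be an arc of F_q^k with |S| ≥ k, and let A be a subset of S with |A| = k−2. Then the number of hyperplanes (i.e., (k−1)-dimensional linear subspaces) H of F_q^k with H ∩ S = A is exactly q+k−1−|S|. -/

import Mathlib

open Finset

variable {F : Type*} [Field F]

/-- An *arc*: every `k`-subset is a set of linearly independent vectors
(hence a basis of `F^k`). -/
def IsArc {k : ℕ} (S : Set (Fin k → F)) : Prop :=
  ∀ T : Finset (Fin k → F), ↑T ⊆ S → T.card = k →
    LinearIndependent F (Subtype.val : {x // x ∈ T} → (Fin k → F))

/-- The *weight* of a vector: its number of nonzero coordinates. -/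
noncomputable def weight {ι : Type*} (w : ι → F) : ℕ := Nat.card {i // w i ≠ 0}

/-- `det(u, C)`: the determinant of the `k × k` matrix whose first row is `u` and whose
remaining rows are the vectors `g i`, `i ∈ C`, listed in increasing order of the index set. -/
noncomputable def detWith {k m : ℕ} (g : Fin m → Fin k → F)
    (u : Fin k → F) (C : Finset (Fin m)) : F :=
  if h : C.card + 1 = k then
    Matrix.det (Matrix.of ((Fin.cons u fun j => g (C.orderEmbOfFin rfl j)) ∘ Fin.cast h.symm))
  else 0

/-- The matrix `M_n` associated to an ordered arc `g : Fin m → (Fin k → F)`. -/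
noncomputable def arcMatrix {k m : ℕ} (g : Fin m → Fin k → F) (n : ℕ) :
    Matrix {C : Finset (Fin m) // C.card = k - 1}
      {AE : Finset (Fin m) × Finset (Fin m) //
        AE.2.card = m - n ∧ AE.1 ⊆ AE.2 ∧ AE.1.card = k - 2} F :=
  fun C AE =>
    if AE.1.1 ⊆ C.1 then ∏ u ∈ Finset.univ \ AE.1.2, detWith g (g u) C.1 else 0

/-- `det(z, Y₁, …, Y_{k-1})`. -/
noncomputable def detRows {k : ℕ} (z : Fin k → F) (Y : Fin (k - 1) → Fin k → F) : F :=
  if h : k - 1 + 1 = k then Matrix.det (Matrix.of ((Fin.cons z Y) ∘ Fin.cast h.symm)) else 0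

/-- `d_A(u,v) = det(u, v, p₁, …, p_{k-2})` for an ordered tuple `A = (p₁, …, p_{k-2})`. -/
noncomputable def dA {k : ℕ} (p : Fin (k - 2) → Fin k → F) (u v : Fin k → F) : F :=
  if h : k - 2 + 1 + 1 = k then
    Matrix.det (Matrix.of ((Fin.cons u (Fin.cons v p)) ∘ Fin.cast h.symm))
  else 0

/-- `f` is a tangent polynomial for the `(k-2)`-subset `A` of the arc `S`:
a product of `t` pairwise linearly independent linear forms whose kernels meet `S` in `A`. -/
def IsTangentPoly {k : ℕ} (t : ℕ) (S A : Set (Fin k → F)) (f : (Fin k → F) → F) : Prop :=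
  ∃ α : Fin t → ((Fin k → F) →ₗ[F] F),
    (∀ i j, i ≠ j → LinearIndependent F ![α i, α j]) ∧
    (∀ i, S ∩ {x | α i x = 0} = A) ∧
    ∀ x, f x = ∏ i, α i x

/-- Compatible families `(α_A)` (on `(k-2)`-subsets) and `(α_C)` (on `(k-1)`-subsets)
of nonzero scalars, relative to the tangent polynomials `f`. -/
def CompatibleFamilies {k m : ℕ} (t : ℕ) (g : Fin m → Fin k → F)
    (f : Finset (Fin m) → (Fin k → F) → F) (a c : Finset (Fin m) → F) : Prop :=
  (∀ A : Finset (Fin m), A.card = k - 2 → a A ≠ 0) ∧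
  (∀ C : Finset (Fin m), C.card = k - 1 → c C ≠ 0) ∧
  ∀ A : Finset (Fin m), A.card = k - 2 → ∀ e, e ∉ A →
    c (insert e A) =
      (-1 : F) ^ ((A.filter fun i => e < i).card * (t + 1)) * a A * f A (g e)

/-- The polynomial `φ(Y₁, …, Y_{k-1}) = Σ_C (α_C)^e ∏_{z ∈ E∖C} det(z,Y)/det(z,C)`. -/
noncomputable def phiPoly {k M : ℕ} (e : ℕ) (g : Fin M → Fin k → F)
    (c : Finset (Fin M) → F) (E : Finset (Fin M)) (Y : Fin (k - 1) → Fin k → F) : F :=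
  ∑ C ∈ E.powersetCard (k - 1), (c C) ^ e *
    ∏ z ∈ E \ C, detRows (g z) Y / detWith g (g z) C

/-- `(G, n)` has *Property W*. -/
def PropertyW {k m : ℕ} (g : Fin m → Fin k → F) (n : ℕ) : Prop :=
  ∀ A : Finset (Fin m), A.card = k - 2 →
    ∃ (C : Finset (Fin m)) (Cs : Fin (m - n - k + 1) → Finset (Fin m)),
      C.card = k - 1 ∧ A ⊆ C ∧
      (∀ i, (Cs i).card = k - 1 ∧ A ⊆ Cs i ∧ Cs i ≠ C) ∧
      Function.Injective Cs ∧
      ∀ i, ∃ x, ∀ D : {C : Finset (Fin m) // C.card = k - 1},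
        ((arcMatrix g n).mulVec x) D ≠ 0 ↔ (D.1 = C ∨ D.1 = Cs i)

private lemma mySubne (T : Type*) [Zero T] [Finite T] :
    Nat.card {w : T // w ≠ 0} + 1 = Nat.card T := by
  classical
  rw [← Nat.card_congr (Equiv.optionSubtypeNe (0 : T)), Finite.card_option]

private lemma myCardLines [Fintype F] (V : Type*) [AddCommGroup V]
    [Module F V] [Finite V] [FiniteDimensional F V] (h2 : Module.finrank F V = 2) :
    Nat.card {L : Submodule F V // Module.finrank F L = 1} = Fintype.card F + 1 := by
  classical
  haveI : Fintype V := Fintype.ofFinite V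
  have hq : 2 ≤ Fintype.card F := Fintype.one_lt_card
  have hV : Fintype.card V = Fintype.card F ^ 2 := by
    rw [Module.card_eq_pow_finrank (K := F) (V := V), h2]
  set L := {L : Submodule F V // Module.finrank F L = 1} with hLdef
  have πrank : ∀ v : {v : V // v ≠ 0}, Module.finrank F (Submodule.span F {v.1}) = 1 :=
    fun v => finrank_span_singleton v.2
  set π : {v : V // v ≠ 0} → L := fun v => ⟨Submodule.span F {v.1}, πrank v⟩ with hπdef
  have fibcard : ∀ l : L, Fintype.card {v : {v : V // v ≠ 0} // π v = l}
      = Fintype.card F - 1 := by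
    intro l
    have e : {v : {v : V // v ≠ 0} // π v = l} ≃ {w : l.1 // w ≠ 0} :=
      { toFun := fun v => ⟨⟨v.1.1, by
          have h : Submodule.span F {v.1.1} = l.1 := congrArg Subtype.val v.2
          rw [← h]; exact Submodule.mem_span_singleton_self _⟩, by
          simp only [ne_eq, Submodule.mk_eq_zero]; exact v.1.2⟩
        invFun := fun w => ⟨⟨w.1.1, fun h => w.2 (Subtype.ext h)⟩, by
          apply Subtype.ext
          apply Submodule.eq_of_le_of_finrank_eq
          · rw [Submodule.span_le, Set.singleton_subset_iff]; exact w.1.2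
          · rw [finrank_span_singleton (fun h => w.2 (Subtype.ext h)), l.2]⟩
        left_inv := fun v => by ext; rfl
        right_inv := fun w => by ext; rfl }
    have hc : Fintype.card l.1 = Fintype.card F := by
      rw [Module.card_eq_pow_finrank (K := F) (V := l.1), l.2, pow_one]
    have h4 := mySubne l.1
    rw [Nat.card_eq_fintype_card, Nat.card_eq_fintype_card] at h4
    rw [Fintype.card_congr e]
    omega
  have total : Fintype.card {v : V // v ≠ 0} = Fintype.card L * (Fintype.card F - 1) := by
    rw [← Fintype.card_congr (Equiv.sigmaFiberEquiv π), Fintype.card_sigma]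
    simp only [fibcard]
    rw [Finset.sum_const, Finset.card_univ, smul_eq_mul]
  have tot2 := mySubne V
  rw [Nat.card_eq_fintype_card, Nat.card_eq_fintype_card] at tot2
  rw [total, hV] at tot2
  obtain ⟨r, hr⟩ : ∃ r, Fintype.card F = r + 2 := ⟨Fintype.card F - 2, by omega⟩
  rw [hr] at tot2 ⊢
  have e1 : r + 2 - 1 = r + 1 := by omega
  rw [e1] at tot2
  have h1 : (r + 3) * (r + 1) + 1 = (r + 2) ^ 2 := by ring
  have key : Fintype.card L * (r + 1) = (r + 3) * (r + 1) :=
    Nat.add_right_cancel (tot2.trans h1.symm)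
  have : Fintype.card L = r + 3 := Nat.eq_of_mul_eq_mul_right (by omega) key
  rw [Nat.card_eq_fintype_card, this]

private lemma myFinrankMap {M : Type*} [AddCommGroup M] [Module F M]
    [FiniteDimensional F M] (W H : Submodule F M) (hWH : W ≤ H) :
    Module.finrank F (H.map W.mkQ) + Module.finrank F W = Module.finrank F H := by
  have h1 := LinearMap.finrank_range_add_finrank_ker (W.mkQ.domRestrict H)
  rw [LinearMap.range_domRestrict, LinearMap.ker_domRestrict, Submodule.ker_mkQ] at h1
  rw [← h1]
  congr 1
  exact (Submodule.comapSubtypeEquivOfLe hWH).finrank_eq.symm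

private lemma myCardHyper [Fintype F] {k : ℕ} (hk : 3 ≤ k) (W : Submodule F (Fin k → F))
    (hW : Module.finrank F W = k - 2) :
    Nat.card {H : Submodule F (Fin k → F) // W ≤ H ∧ Module.finrank F H = k - 1}
      = Fintype.card F + 1 := by
  haveI : Finite ((Fin k → F) ⧸ W) := Finite.of_surjective _ (Submodule.mkQ_surjective W)
  have hM : Module.finrank F (Fin k → F) = k := Module.finrank_fin_fun F
  have hQ : Module.finrank F ((Fin k → F) ⧸ W) = 2 := by
    have := Submodule.finrank_quotient_add_finrank W
    omega
  have hker : ∀ L : Submodule F ((Fin k → F) ⧸ W), W ≤ L.comap W.mkQ := by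
    intro L x hx
    have : W.mkQ x = 0 := (Submodule.Quotient.mk_eq_zero W).mpr hx
    simp only [Submodule.mem_comap, this]
    exact L.zero_mem
  have hcomaprank : ∀ L : Submodule F ((Fin k → F) ⧸ W), Module.finrank F L = 1 →
      Module.finrank F (L.comap W.mkQ) = k - 1 := by
    intro L hL
    have h3 := myFinrankMap W (L.comap W.mkQ) (hker L)
    rw [Submodule.map_comap_eq_of_surjective (Submodule.mkQ_surjective W), hL, hW] at h3
    omega
  rw [← myCardLines ((Fin k → F) ⧸ W) hQ]
  apply Nat.card_congr
  refine ⟨fun H => ⟨H.1.map W.mkQ, ?_⟩, fun L => ⟨L.1.comap W.mkQ, hker L.1, hcomaprank L.1 L.2⟩,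
    fun H => ?_, fun L => ?_⟩
  · have := myFinrankMap W H.1 H.2.1
    rw [H.2.2, hW] at this
    omega
  · apply Subtype.ext
    show Submodule.comap W.mkQ (Submodule.map W.mkQ H.1) = H.1
    rw [Submodule.comap_map_eq, Submodule.ker_mkQ, sup_eq_left.mpr H.2.1]
  · apply Subtype.ext
    show Submodule.map W.mkQ (Submodule.comap W.mkQ L.1) = L.1
    exact Submodule.map_comap_eq_of_surjective (Submodule.mkQ_surjective W) L.1

theorem stmt1 [Fintype F] {k : ℕ} (hk : 3 ≤ k)
    (S : Finset (Fin k → F)) (hS : IsArc (↑S : Set (Fin k → F))) (hSk : k ≤ S.card)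
    (A : Finset (Fin k → F)) (hA : A ⊆ S) (hAcard : A.card = k - 2) :
    Nat.card {H : Submodule F (Fin k → F) //
        Module.finrank F H = k - 1 ∧ (↑S ∩ (H : Set (Fin k → F))) = ↑A}
      + S.card = Fintype.card F + k - 1 := by
  classical
  haveI : Finite (Submodule F (Fin k → F)) :=
    Finite.of_injective (fun p : Submodule F (Fin k → F) => (p : Set (Fin k → F)))
      SetLike.coe_injective
  have hindep : ∀ T : Finset (Fin k → F), T ⊆ S → T.card ≤ k →
      LinearIndependent F ((↑) : {x // x ∈ T} → (Fin k → F)) := by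
    intro T hT hTk
    obtain ⟨B, hTB, hBS, hBc⟩ := Finset.exists_subsuperset_card_eq hT hTk hSk
    have hB := hS B (Finset.coe_subset.mpr hBS) hBc
    exact hB.comp (fun x : {x // x ∈ T} => (⟨x.1, hTB x.2⟩ : {x // x ∈ B}))
      (fun a b h => Subtype.ext (congrArg Subtype.val h :))
  set W := Submodule.span F (↑A : Set (Fin k → F)) with hWdef
  have hWrank : Module.finrank F W = k - 2 := by
    rw [hWdef, finrank_span_finset_eq_card (hindep A hA (by omega)), hAcard]
  set φ : (Fin k → F) → Submodule F (Fin k → F) :=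
    fun x => Submodule.span F (↑(insert x A) : Set (Fin k → F)) with hφdef
  have hφmem : ∀ x, x ∈ φ x := fun x => Submodule.subset_span (by simp)
  have hφW : ∀ x, W ≤ φ x := fun x => Submodule.span_mono (by
    rw [Finset.coe_insert]; exact Set.subset_insert _ _)
  have hxA : ∀ x ∈ S \ A, (insert x A).card = k - 1 := by
    intro x hx
    rw [Finset.card_insert_of_notMem (Finset.mem_sdiff.mp hx).2, hAcard]; omega
  have hφrank : ∀ x ∈ S \ A, Module.finrank F (φ x) = k - 1 := by
    intro x hx
    have h1 : insert x A ⊆ S := Finset.insert_subset (Finset.mem_sdiff.mp hx).1 hA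
    rw [hφdef, finrank_span_finset_eq_card (hindep _ h1 (by rw [hxA x hx]; omega)), hxA x hx]
  have hmax : ∀ H : Submodule F (Fin k → F), W ≤ H → Module.finrank F H = k - 1 →
      ∀ x ∈ S \ A, x ∈ H → H = φ x := by
    intro H hWH hHr x hx hxH
    have hle : φ x ≤ H := by
      rw [hφdef, Submodule.span_le]
      intro y hy
      rcases Finset.mem_insert.mp (by exact_mod_cast hy) with rfl | hyA
      · exact hxH
      · exact hWH (Submodule.subset_span (by exact_mod_cast hyA))
    exact (Submodule.eq_of_le_of_finrank_eq hle (by rw [hφrank x hx, hHr])).symm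
  have hinj : Set.InjOn φ ↑(S \ A) := by
    intro x hx y hy hxy
    by_contra hne
    have hx' := Finset.mem_sdiff.mp (by exact_mod_cast hx : x ∈ S \ A)
    have hy' := Finset.mem_sdiff.mp (by exact_mod_cast hy : y ∈ S \ A)
    have hxi : x ∉ insert y A := by
      simp only [Finset.mem_insert, not_or]
      exact ⟨hne, hx'.2⟩
    have hcard : (insert x (insert y A)).card = k := by
      rw [Finset.card_insert_of_notMem hxi, Finset.card_insert_of_notMem hy'.2, hAcard]
      omega
    have hsub : insert x (insert y A) ⊆ S :=
      Finset.insert_subset hx'.1 (Finset.insert_subset hy'.1 hA)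
    have hspan : Module.finrank F (Submodule.span F (↑(insert x (insert y A)) : Set (Fin k → F))) = k := by
      rw [finrank_span_finset_eq_card (hindep _ hsub (le_of_eq hcard)), hcard]
    have hle : Submodule.span F (↑(insert x (insert y A)) : Set (Fin k → F)) ≤ φ x := by
      rw [Submodule.span_le]
      intro z hz
      rcases Finset.mem_insert.mp (by exact_mod_cast hz) with rfl | hz2
      · exact hφmem z
      rcases Finset.mem_insert.mp hz2 with rfl | hz3
      · exact hxy ▸ hφmem z
      · exact hφW x (Submodule.subset_span (by exact_mod_cast hz3))
    have hmono := Submodule.finrank_mono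
      (s := Submodule.span F (↑(insert x (insert y A)) : Set (Fin k → F))) (t := φ x) hle
    rw [hspan, hφrank x (by exact_mod_cast hx)] at hmono
    omega
  set 𝒳 : Set (Submodule F (Fin k → F)) :=
    {H | W ≤ H ∧ Module.finrank F H = k - 1} with hXdef
  set 𝒯 : Set (Submodule F (Fin k → F)) :=
    {H | Module.finrank F H = k - 1 ∧ (↑S ∩ (H : Set (Fin k → F))) = ↑A} with hTdef
  have hAW : ∀ a ∈ A, a ∈ W := fun a ha => Submodule.subset_span (by exact_mod_cast ha)
  have hTX : 𝒯 ⊆ 𝒳 := by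
    intro H hH
    refine ⟨?_, hH.1⟩
    rw [hWdef, Submodule.span_le]
    intro a ha
    have hmem : a ∈ (↑S ∩ (H : Set (Fin k → F))) := by rw [hH.2]; exact ha
    exact hmem.2
  have hdiff : 𝒳 \ 𝒯 = φ '' ↑(S \ A) := by
    ext H
    constructor
    · rintro ⟨⟨hWH, hHr⟩, hHT⟩
      have hne : (↑S ∩ (H : Set (Fin k → F))) ≠ ↑A := fun h => hHT ⟨hHr, h⟩
      have hsub : (↑A : Set (Fin k → F)) ⊆ ↑S ∩ (H : Set (Fin k → F)) := fun a ha =>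
        ⟨by exact_mod_cast hA (by exact_mod_cast ha), hWH (hAW a (by exact_mod_cast ha))⟩
      obtain ⟨x, hxSH, hxA2⟩ : ∃ x, x ∈ (↑S ∩ (H : Set (Fin k → F))) ∧ x ∉ (↑A : Set (Fin k → F)) := by
        by_contra hc
        push_neg at hc
        exact hne (Set.Subset.antisymm hc hsub)
      have hxSA : x ∈ S \ A :=
        Finset.mem_sdiff.mpr ⟨by exact_mod_cast hxSH.1, by exact_mod_cast hxA2⟩
      exact ⟨x, by exact_mod_cast hxSA, (hmax H hWH hHr x hxSA hxSH.2).symm⟩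
    · rintro ⟨x, hx, rfl⟩
      have hx' : x ∈ S \ A := by exact_mod_cast hx
      have hx'' := Finset.mem_sdiff.mp hx'
      refine ⟨⟨hφW x, hφrank x hx'⟩, ?_⟩
      rintro ⟨-, habs⟩
      have hxa : x ∈ (↑A : Set (Fin k → F)) := by
        rw [← habs]; exact ⟨by exact_mod_cast hx''.1, hφmem x⟩
      exact hx''.2 (by exact_mod_cast hxa)
  have hXcard : 𝒳.ncard = Fintype.card F + 1 := by
    rw [← Nat.card_coe_set_eq, ← myCardHyper hk W hWrank]
    exact Nat.card_congr (Equiv.subtypeEquivRight fun H => Iff.rfl)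
  have hDcard : (𝒳 \ 𝒯).ncard = S.card - (k - 2) := by
    rw [hdiff, Set.ncard_image_of_injOn hinj, Set.ncard_coe_finset, Finset.card_sdiff_of_subset hA, hAcard]
  have hsplit := Set.ncard_diff_add_ncard_of_subset hTX (Set.toFinite 𝒳)
  have hAk : A.card ≤ S.card := Finset.card_le_card hA
  have hTcard : Nat.card {H : Submodule F (Fin k → F) //
      Module.finrank F H = k - 1 ∧ (↑S ∩ (H : Set (Fin k → F))) = ↑A} = 𝒯.ncard :=
    Nat.card_coe_set_eq 𝒯
  rw [hTcard]
  omega
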